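/- Let F : ℝ_{>0} → ℂ be continuous and bounded on (0,∞) with ∫_0^∞ |F(p)| dp < ∞, let a ∈ ℂ with a ≠ 0, and define f_k = a^{-k} ∫_0^∞ e^{-kp} F(p) dp for k ≥ 1. Then for all z ∈ ℂ with |z| < |a| and z·a ∉ ℝ_{≥0}·a² (i.e., z/a not on [0,∞)), Σ_{n=1}^∞ f_n z^n = z ∫_0^∞ F(ln(1+s)) / ((1+s)(s·a + a − z)) ds. -/

import Mathlib

open MeasureTheory Set

theorem stmt3 (F : ℝ → ℂ) (hFc : ContinuousOn F (Ioi 0))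
    (hFbd : ∃ C : ℝ, ∀ p ∈ Ioi (0 : ℝ), ‖F p‖ ≤ C)
    (hFint : IntegrableOn F (Ioi 0))
    (a : ℂ) (ha : a ≠ 0) (z : ℂ) (hz : ‖z‖ < ‖a‖)
    (hray : ∀ t : ℝ, 0 ≤ t → z ≠ (t : ℂ) * a) :
    ∑' n : ℕ,
        (a ^ (-(n + 1 : ℤ)) * ∫ p in Ioi (0 : ℝ), Complex.exp (-((n : ℂ) + 1) * p) * F p) *
          z ^ (n + 1) =
      z * ∫ s in Ioi (0 : ℝ),
        F (Real.log (1 + s)) / ((1 + (s : ℂ)) * ((s : ℂ) * a + a - z)) := by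
  set w : ℂ := z / a with hw_def
  have hw : ‖w‖ < 1 := by
    rw [hw_def, norm_div, div_lt_one (lt_of_le_of_lt (norm_nonneg z) hz)]
    exact hz
  have hza : z = w * a := by rw [hw_def]; exact (div_mul_cancel₀ z ha).symm
  -- nonvanishing: exp p ≠ w for real p
  have hexp_ne : ∀ p : ℝ, (Complex.exp p - w) ≠ 0 := by
    intro p h
    have hw' : w = Complex.exp p := (sub_eq_zero.mp h).symm
    have : z = ((Real.exp p) : ℂ) * a := by rw [Complex.ofReal_exp, ← hw', hza]
    exact hray _ (Real.exp_pos p).le this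
  -- norm facts for the geometric ratio
  have hnorm_exp : ∀ p : ℝ, ‖Complex.exp (-(p : ℂ))‖ = Real.exp (-p) := by
    intro p
    rw [← Complex.ofReal_neg, ← Complex.ofReal_exp, Complex.norm_real,
      Real.norm_of_nonneg (Real.exp_pos _).le]
  have hx_le : ∀ p : ℝ, 0 < p → ‖w * Complex.exp (-(p : ℂ))‖ ≤ ‖w‖ := by
    intro p hp
    rw [norm_mul, hnorm_exp]
    calc ‖w‖ * Real.exp (-p) ≤ ‖w‖ * 1 :=
          mul_le_mul_of_nonneg_left (Real.exp_le_one_iff.mpr (by linarith)) (norm_nonneg w)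
      _ = ‖w‖ := mul_one _
  have hx_lt : ∀ p : ℝ, 0 < p → ‖w * Complex.exp (-(p : ℂ))‖ < 1 := fun p hp =>
    lt_of_le_of_lt (hx_le p hp) hw
  have hone_ne : ∀ p : ℝ, 0 < p → (1 - w * Complex.exp (-(p : ℂ))) ≠ 0 := by
    intro p hp h
    have h1 : w * Complex.exp (-(p : ℂ)) = 1 := by linear_combination -h
    have := hx_lt p hp
    rw [h1, norm_one] at this
    exact lt_irrefl 1 this
  -- the terms of the series
  have hterm : ∀ n : ℕ,
      (a ^ (-(n + 1 : ℤ)) * ∫ p in Ioi (0 : ℝ), Complex.exp (-((n : ℂ) + 1) * p) * F p) *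
          z ^ (n + 1)
        = ∫ p in Ioi (0 : ℝ), F p * (w * Complex.exp (-(p : ℂ))) ^ (n + 1) := by
    intro n
    rw [← integral_const_mul, ← integral_mul_const]
    apply setIntegral_congr_fun measurableSet_Ioi
    intro p _
    simp only
    have hexp : Complex.exp (-((n : ℂ) + 1) * p) = (Complex.exp (-(p : ℂ))) ^ (n + 1) := by
      rw [← Complex.exp_nat_mul]; congr 1; push_cast; ring
    rw [hexp, hza, show (-((n : ℤ) + 1)) = -(((n+1) : ℕ) : ℤ) by push_cast; ring,
      zpow_neg, zpow_natCast]
    field_simp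
    ring
  -- integrability of each term
  have hcont : ∀ n : ℕ, Continuous fun p : ℝ => (w * Complex.exp (-(p : ℂ))) ^ (n + 1) := by
    intro n
    exact ((continuous_const.mul ((Complex.continuous_exp).comp
      (Complex.continuous_ofReal.neg))).pow (n + 1))
  have hmeas : ∀ n : ℕ, AEStronglyMeasurable
      (fun p : ℝ => F p * (w * Complex.exp (-(p : ℂ))) ^ (n + 1))
      (volume.restrict (Ioi 0)) := fun n =>
    hFint.aestronglyMeasurable.mul ((hcont n).aestronglyMeasurable)
  have hbound : ∀ n : ℕ, ∀ᵐ p ∂(volume.restrict (Ioi (0:ℝ))),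
      ‖F p * (w * Complex.exp (-(p : ℂ))) ^ (n + 1)‖ ≤ ‖w‖ ^ (n + 1) * ‖F p‖ := by
    intro n
    filter_upwards [ae_restrict_mem measurableSet_Ioi] with p hp
    rw [norm_mul, norm_pow]
    calc ‖F p‖ * ‖w * Complex.exp (-(p : ℂ))‖ ^ (n + 1)
        ≤ ‖F p‖ * ‖w‖ ^ (n + 1) := by
          apply mul_le_mul_of_nonneg_left _ (norm_nonneg _)
          exact pow_le_pow_left₀ (norm_nonneg _) (hx_le p hp) _
      _ = ‖w‖ ^ (n + 1) * ‖F p‖ := mul_comm _ _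
  have hInt : ∀ n : ℕ, Integrable
      (fun p : ℝ => F p * (w * Complex.exp (-(p : ℂ))) ^ (n + 1))
      (volume.restrict (Ioi 0)) := by
    intro n
    apply Integrable.mono' (hFint.norm.const_mul (‖w‖ ^ (n + 1))) (hmeas n) (hbound n)
  -- summability of integrals of norms
  have hSum : Summable fun n : ℕ =>
      ∫ p in Ioi (0:ℝ), ‖F p * (w * Complex.exp (-(p : ℂ))) ^ (n + 1)‖ := by
    apply Summable.of_nonneg_of_le
      (fun n => integral_nonneg fun p => norm_nonneg _)
      (fun n => ?_)
      (((summable_geometric_of_lt_one (norm_nonneg w) hw).mul_right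
        (‖w‖ * ∫ p in Ioi (0:ℝ), ‖F p‖)))
    calc (∫ p in Ioi (0:ℝ), ‖F p * (w * Complex.exp (-(p : ℂ))) ^ (n + 1)‖)
        ≤ ∫ p in Ioi (0:ℝ), ‖w‖ ^ (n + 1) * ‖F p‖ :=
          integral_mono_ae ((hInt n).norm) (hFint.norm.const_mul _) (hbound n)
      _ = ‖w‖ ^ n * (‖w‖ * ∫ p in Ioi (0:ℝ), ‖F p‖) := by
          rw [integral_const_mul]; ring
  -- sum the geometric series inside the integral
  have hswap : ∑' n : ℕ, ∫ p in Ioi (0:ℝ), F p * (w * Complex.exp (-(p : ℂ))) ^ (n + 1)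
      = ∫ p in Ioi (0:ℝ), F p * (w * Complex.exp (-(p : ℂ)))
          * (1 - w * Complex.exp (-(p : ℂ)))⁻¹ := by
    rw [integral_tsum_of_summable_integral_norm hInt hSum]
    apply setIntegral_congr_fun measurableSet_Ioi
    intro p hp
    simp only
    have hgeom : ∑' n : ℕ, (w * Complex.exp (-(p : ℂ))) ^ n
        = (1 - w * Complex.exp (-(p : ℂ)))⁻¹ := tsum_geometric_of_norm_lt_one (hx_lt p hp)
    calc ∑' n : ℕ, F p * (w * Complex.exp (-(p : ℂ))) ^ (n + 1)
        = ∑' n : ℕ, (F p * (w * Complex.exp (-(p : ℂ)))) * (w * Complex.exp (-(p : ℂ))) ^ n := by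
          apply tsum_congr; intro n; ring
      _ = (F p * (w * Complex.exp (-(p : ℂ)))) * (1 - w * Complex.exp (-(p : ℂ)))⁻¹ := by
          rw [tsum_mul_left, hgeom]
      _ = _ := by ring
  -- change of variables on the right-hand side
  have himg : (fun p : ℝ => Real.exp p - 1) '' Ioi 0 = Ioi 0 := by
    ext s
    constructor
    · rintro ⟨p, hp, rfl⟩
      have : 1 < Real.exp p := Real.one_lt_exp_iff.mpr hp
      exact mem_Ioi.mpr (by simpa using this)
    · intro hs
      refine ⟨Real.log (1 + s), ?_, ?_⟩
      · exact mem_Ioi.mpr (Real.log_pos (by simpa using hs))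
      · show Real.exp (Real.log (1 + s)) - 1 = s
        rw [Real.exp_log (by linarith [mem_Ioi.mp hs])]; ring
  have hsub : (∫ s in Ioi (0:ℝ),
        F (Real.log (1 + s)) / ((1 + (s : ℂ)) * ((s : ℂ) * a + a - z)))
      = ∫ p in Ioi (0:ℝ), |Real.exp p| •
          (F (Real.log (1 + (Real.exp p - 1))) /
            ((1 + ((Real.exp p - 1 : ℝ) : ℂ)) * (((Real.exp p - 1 : ℝ) : ℂ) * a + a - z))) := by
    conv_lhs => rw [← himg]
    exact integral_image_eq_integral_abs_deriv_smul measurableSet_Ioi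
      (fun x _ => ((Real.hasDerivAt_exp x).sub_const 1).hasDerivWithinAt)
      (fun x _ y _ h => Real.exp_injective (by linarith))
      (fun s => F (Real.log (1 + s)) / ((1 + (s : ℂ)) * ((s : ℂ) * a + a - z)))
  -- identify the two integrals
  rw [tsum_congr hterm, hswap, hsub, ← integral_const_mul]
  apply setIntegral_congr_fun measurableSet_Ioi
  intro p hp
  simp only
  have h1 : Real.log (1 + (Real.exp p - 1)) = p := by
    rw [show (1 : ℝ) + (Real.exp p - 1) = Real.exp p by ring, Real.log_exp]
  have h2 : ((Real.exp p : ℝ) : ℂ) = Complex.exp p := Complex.ofReal_exp p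
  have h3 : (1 : ℂ) + ((Real.exp p - 1 : ℝ) : ℂ) = Complex.exp p := by push_cast [h2]; ring
  have h4 : ((Real.exp p - 1 : ℝ) : ℂ) * a + a - z = Complex.exp p * a - z := by
    push_cast [h2]; ring
  have hE : Complex.exp (p : ℂ) ≠ 0 := Complex.exp_ne_zero _
  have hEn : Complex.exp (-(p : ℂ)) = (Complex.exp (p : ℂ))⁻¹ := Complex.exp_neg _
  have h5 : Complex.exp (p : ℂ) * a - z = a * (Complex.exp p - w) := by
    rw [hza]; ring
  have hne1 : (1 - w * (Complex.exp (p : ℂ))⁻¹) ≠ 0 := by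
    rw [← hEn]; exact hone_ne p hp
  have hne2 : Complex.exp (p : ℂ) - w ≠ 0 := hexp_ne p
  rw [h1, Complex.real_smul, Real.abs_exp, h2, h3, h4, h5, hEn, hza]
  field_simp
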